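/- Let G and H be finite groups that are isoclinic, i.e., there exist a group isomorphism φ : G/Z(G) → H/Z(H) and a group isomorphism ψ : [G,G] → [H,H] such that for all g₁, g₂ ∈ G and h₁, h₂ ∈ H, if φ(g₁·Z(G)) = h₁·Z(H) and φ(g₂·Z(G)) = h₂·Z(H), then ψ([g₁,g₂]) = [h₁,h₂]. Then the number of z-classes of G equals the number of z-classes of H. -/

import Mathlib

open scoped Matrix
open scoped commutatorElement

/-- Two elements are z-equivalent if their centralizers are conjugate. -/
def zEquiv {G : Type*} [Group G] (g₁ g₂ : G) : Prop :=
  ∃ t : G, (Subgroup.centralizer {g₁}).map (MulAut.conj t).toMonoidHom =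
    Subgroup.centralizer {g₂}

/-- The set of z-classes of a group. -/
def zClasses (G : Type*) [Group G] : Set (Set G) :=
  Set.range fun g => {h | zEquiv g h}

namespace ZAux

variable {G : Type*} [Group G]

lemma conj_map_map (a b : G) (K : Subgroup G) :
    (K.map (MulAut.conj b).toMonoidHom).map (MulAut.conj a).toMonoidHom
      = K.map (MulAut.conj (a * b)).toMonoidHom := by
  rw [Subgroup.map_map]
  congr 1
  ext x
  simp [mul_assoc]

lemma conj_one_map (K : Subgroup G) : K.map (MulAut.conj (1 : G)).toMonoidHom = K := by
  ext x; simp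

lemma zEquiv_refl (g : G) : zEquiv g g := ⟨1, conj_one_map _⟩

lemma zEquiv_symm {a b : G} (h : zEquiv a b) : zEquiv b a := by
  obtain ⟨t, ht⟩ := h
  exact ⟨t⁻¹, by rw [← ht, conj_map_map, inv_mul_cancel, conj_one_map]⟩

lemma zEquiv_trans {a b c : G} (h1 : zEquiv a b) (h2 : zEquiv b c) : zEquiv a c := by
  obtain ⟨t, ht⟩ := h1; obtain ⟨s, hs⟩ := h2
  exact ⟨s * t, by rw [← conj_map_map, ht, hs]⟩

lemma commutator_center_mul (a b z : G) (hz : z ∈ Subgroup.center G) :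
    ⁅a * z, b⁆ = ⁅a, b⁆ := by
  have h1 : z * b = b * z := ((Subgroup.mem_center_iff.mp hz) b).symm
  have h2 : z * b * z⁻¹ = b := by rw [h1, mul_inv_cancel_right]
  have h3 : ⁅a * z, b⁆ = a * (z * b * z⁻¹) * a⁻¹ * b⁻¹ := by
    simp only [commutatorElement_def]; group
  rw [h3, h2, commutatorElement_def]

lemma centralizer_eq_of_mk_eq {a b : G}
    (hab : (a : G ⧸ Subgroup.center G) = b) :
    Subgroup.centralizer {a} = Subgroup.centralizer {b} := by
  have hz : a⁻¹ * b ∈ Subgroup.center G := by rwa [← QuotientGroup.eq]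
  have hc : ∀ x : G, Commute (a⁻¹ * b) x :=
    fun x => ((Subgroup.mem_center_iff.mp hz) x).symm
  ext x
  simp only [Subgroup.mem_centralizer_singleton_iff]
  constructor
  · intro h
    have hb : b = a * (a⁻¹ * b) := by group
    rw [hb]
    exact (Commute.mul_right h (hc x).symm).eq
  · intro h
    have ha : a = b * (a⁻¹ * b)⁻¹ := by group
    rw [ha]
    exact (Commute.mul_right h (hc x).symm.inv_right).eq

/-- Image of the centralizer in the quotient mod center. -/
def Cbar (g : G) : Subgroup (G ⧸ Subgroup.center G) :=
  (Subgroup.centralizer {g}).map (QuotientGroup.mk' (Subgroup.center G))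

lemma mem_Cbar {g x : G} :
    (↑x : G ⧸ Subgroup.center G) ∈ Cbar g ↔ ⁅x, g⁆ = 1 := by
  constructor
  · rintro ⟨x', hx', hmk⟩
    have h1 : (x' : G ⧸ Subgroup.center G) = ↑x := hmk
    have hz : x'⁻¹ * x ∈ Subgroup.center G := by rwa [← QuotientGroup.eq]
    have hx'c : ⁅x', g⁆ = 1 := commutatorElement_eq_one_iff_mul_comm.mpr
      (Subgroup.mem_centralizer_singleton_iff.mp hx')
    have hxx : x = x' * (x'⁻¹ * x) := by group
    rw [hxx, commutator_center_mul _ _ _ hz, hx'c]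
  · intro hcm
    exact ⟨x, Subgroup.mem_centralizer_singleton_iff.mpr
      (commutatorElement_eq_one_iff_mul_comm.mp hcm), rfl⟩

lemma map_conj_mk (t : G) (K : Subgroup G) :
    (K.map (MulAut.conj t).toMonoidHom).map (QuotientGroup.mk' (Subgroup.center G))
      = (K.map (QuotientGroup.mk' (Subgroup.center G))).map
          (MulAut.conj ((t : G ⧸ Subgroup.center G))).toMonoidHom := by
  rw [Subgroup.map_map, Subgroup.map_map]
  congr 1

lemma map_conj_equiv {H : Type*} [Group H] (e : G ≃* H) (a : G) (K : Subgroup G) :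
    (K.map (MulAut.conj a).toMonoidHom).map e.toMonoidHom
      = (K.map e.toMonoidHom).map (MulAut.conj (e a)).toMonoidHom := by
  rw [Subgroup.map_map, Subgroup.map_map]
  congr 1
  ext x
  simp

lemma center_le_conj_map (s : G) (K : Subgroup G) (hK : Subgroup.center G ≤ K) :
    Subgroup.center G ≤ K.map (MulAut.conj s).toMonoidHom := by
  intro z hz
  refine ⟨z, hK hz, ?_⟩
  have := (Subgroup.mem_center_iff.mp hz) s
  simp only [MulEquiv.toMonoidHom_eq_coe, MonoidHom.coe_coe, MulAut.conj_apply]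
  rw [this, mul_inv_cancel_right]

lemma subgroup_eq_of_map_mk_eq {A B : Subgroup G}
    (hA : Subgroup.center G ≤ A) (hB : Subgroup.center G ≤ B)
    (h : A.map (QuotientGroup.mk' (Subgroup.center G))
       = B.map (QuotientGroup.mk' (Subgroup.center G))) : A = B := by
  have h2 := congrArg (Subgroup.comap (QuotientGroup.mk' (Subgroup.center G))) h
  rwa [Subgroup.comap_map_eq, Subgroup.comap_map_eq, QuotientGroup.ker_mk',
    sup_of_le_left hA, sup_of_le_left hB] at h2

section Transfer

variable {H : Type*} [Group H]

lemma comm_one_iff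
    (φ : (G ⧸ Subgroup.center G) ≃* (H ⧸ Subgroup.center H))
    (ψ : commutator G ≃* commutator H)
    (hcompat : ∀ (g₁ g₂ : G) (h₁ h₂ : H),
      φ (g₁ : G ⧸ Subgroup.center G) = (h₁ : H ⧸ Subgroup.center H) →
      φ (g₂ : G ⧸ Subgroup.center G) = (h₂ : H ⧸ Subgroup.center H) →
      (ψ ⟨⁅g₁, g₂⁆, Subgroup.commutator_mem_commutator (Subgroup.mem_top g₁)
        (Subgroup.mem_top g₂)⟩ : H) = ⁅h₁, h₂⁆)
    {x g : G} {y h : H} (hx : φ ↑x = ↑y) (hg : φ ↑g = ↑h) :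
    ⁅x, g⁆ = 1 ↔ ⁅y, h⁆ = 1 := by
  have hmain := hcompat x g y h hx hg
  constructor
  · intro h1
    have h2 : (⟨⁅x, g⁆, Subgroup.commutator_mem_commutator (Subgroup.mem_top x)
        (Subgroup.mem_top g)⟩ : commutator G) = 1 := Subtype.ext h1
    rw [← hmain, h2, map_one, OneMemClass.coe_one]
  · intro h1
    have h2 : ψ ⟨⁅x, g⁆, Subgroup.commutator_mem_commutator (Subgroup.mem_top x)
        (Subgroup.mem_top g)⟩ = 1 := by
      apply Subtype.ext
      rw [hmain, h1, OneMemClass.coe_one]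
    have h3 := ψ.injective (h2.trans (map_one ψ).symm)
    exact congrArg Subtype.val h3

/-- `φ` carries the image of the centralizer of `g` mod center to that of `h`. -/
lemma map_Cbar
    (φ : (G ⧸ Subgroup.center G) ≃* (H ⧸ Subgroup.center H))
    (hA : ∀ (x g : G) (y h : H), φ ↑x = ↑y → φ ↑g = ↑h → (⁅x, g⁆ = 1 ↔ ⁅y, h⁆ = 1))
    {g : G} {h : H} (hg : φ ↑g = ↑h) :
    (Cbar g).map φ.toMonoidHom = Cbar h := by
  ext q
  obtain ⟨y, rfl⟩ := QuotientGroup.mk_surjective q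
  rw [Subgroup.mem_map_equiv]
  set x := (φ.symm ↑y).out with hxdef
  have hx1 : (↑x : G ⧸ Subgroup.center G) = φ.symm ↑y := QuotientGroup.out_eq' _
  have hx2 : φ ↑x = ↑y := by rw [hx1, MulEquiv.apply_symm_apply]
  rw [← hx1, mem_Cbar, mem_Cbar]
  exact hA x g y h hx2 hg

/-- Transfer of z-equivalence along a center-quotient isomorphism respecting
centralizer images. -/
lemma zEquiv_transfer
    (φ : (G ⧸ Subgroup.center G) ≃* (H ⧸ Subgroup.center H))
    (hφ : ∀ (g : G) (h : H), φ ↑g = ↑h → (Cbar g).map φ.toMonoidHom = Cbar h)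
    {g g' : G} {h h' : H} (hg : φ ↑g = ↑h) (hg' : φ ↑g' = ↑h')
    (he : zEquiv g g') : zEquiv h h' := by
  obtain ⟨t, ht⟩ := he
  have hq : (Cbar g).map (MulAut.conj ((t : G ⧸ Subgroup.center G))).toMonoidHom
      = Cbar g' := by
    unfold Cbar
    rw [← map_conj_mk, ht]
  have hq2 : (Cbar h).map (MulAut.conj (φ ↑t)).toMonoidHom = Cbar h' := by
    rw [← hφ g h hg, ← map_conj_equiv, hq, hφ g' h' hg']
  set s := (φ ↑t).out with hsdef
  have hφt : φ ↑t = ↑s := (QuotientGroup.out_eq' _).symm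
  rw [hφt] at hq2
  refine ⟨s, ?_⟩
  apply subgroup_eq_of_map_mk_eq
  · exact center_le_conj_map s _ (Subgroup.center_le_centralizer _)
  · exact Subgroup.center_le_centralizer _
  · rw [map_conj_mk]
    exact hq2

end Transfer


lemma zEquiv_of_mk_eq {a b : G} (h : (a : G ⧸ Subgroup.center G) = b) : zEquiv a b :=
  ⟨1, by rw [conj_one_map, centralizer_eq_of_mk_eq h]⟩

lemma class_eq_of_zEquiv {a b : G} (hab : zEquiv a b) :
    {h | zEquiv a h} = {h | zEquiv b h} := by
  ext x
  exact ⟨fun hx => zEquiv_trans (zEquiv_symm hab) hx, fun hx => zEquiv_trans hab hx⟩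

noncomputable def quotEquivZClasses (G : Type*) [Group G] :
    Quot (zEquiv (G := G)) ≃ zClasses G := by
  refine Equiv.ofBijective
    (Quot.lift (fun g => (⟨{h | zEquiv g h}, g, rfl⟩ : zClasses G))
      (fun a b hab => Subtype.ext (class_eq_of_zEquiv hab))) ⟨?_, ?_⟩
  · refine Quot.ind fun a => Quot.ind fun b h => ?_
    apply Quot.sound
    have hval : {h | zEquiv a h} = {h | zEquiv b h} := congrArg Subtype.val h
    show zEquiv a b
    have hb : b ∈ {h | zEquiv a h} := by rw [hval]; exact zEquiv_refl b
    exact hb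
  · rintro ⟨S, g, rfl⟩
    exact ⟨Quot.mk _ g, rfl⟩

lemma card_zClasses_congr {H : Type*} [Group H] (f : G → H) (f' : H → G)
    (hresp : ∀ a b : G, zEquiv a b → zEquiv (f a) (f b))
    (hresp' : ∀ a b : H, zEquiv a b → zEquiv (f' a) (f' b))
    (hleft : ∀ g : G, zEquiv (f' (f g)) g)
    (hright : ∀ h : H, zEquiv (f (f' h)) h) :
    Nat.card (zClasses G) = Nat.card (zClasses H) := by
  have e2 : Quot (zEquiv (G := G)) ≃ Quot (zEquiv (G := H)) :=
    { toFun := Quot.lift (fun g => Quot.mk _ (f g))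
        (fun a b hab => Quot.sound (hresp a b hab))
      invFun := Quot.lift (fun h => Quot.mk _ (f' h))
        (fun a b hab => Quot.sound (hresp' a b hab))
      left_inv := Quot.ind fun g => Quot.sound (hleft g)
      right_inv := Quot.ind fun h => Quot.sound (hright h) }
  exact Nat.card_congr (((quotEquivZClasses G).symm.trans e2).trans (quotEquivZClasses H))

end ZAux


/-- isoclinic finite groups have the same number of z-classes. -/
theorem card_zClasses_eq_of_isoclinic (G H : Type*) [Group G] [Group H]
    [Finite G] [Finite H]
    (φ : (G ⧸ Subgroup.center G) ≃* (H ⧸ Subgroup.center H))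
    (ψ : commutator G ≃* commutator H)
    (hcompat : ∀ (g₁ g₂ : G) (h₁ h₂ : H),
      φ (g₁ : G ⧸ Subgroup.center G) = (h₁ : H ⧸ Subgroup.center H) →
      φ (g₂ : G ⧸ Subgroup.center G) = (h₂ : H ⧸ Subgroup.center H) →
      (ψ ⟨⁅g₁, g₂⁆, Subgroup.commutator_mem_commutator (Subgroup.mem_top g₁)
        (Subgroup.mem_top g₂)⟩ : H) = ⁅h₁, h₂⁆) :
    Nat.card (zClasses G) = Nat.card (zClasses H) := by
  classical
  have hA : ∀ (x g : G) (y h : H), φ ↑x = ↑y → φ ↑g = ↑h →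
      (⁅x, g⁆ = 1 ↔ ⁅y, h⁆ = 1) :=
    fun x g y h hx hg => ZAux.comm_one_iff φ ψ hcompat hx hg
  have hφ : ∀ (g : G) (h : H), φ ↑g = ↑h →
      (ZAux.Cbar g).map φ.toMonoidHom = ZAux.Cbar h :=
    fun g h hg => ZAux.map_Cbar φ hA hg
  have hφ' : ∀ (h : H) (g : G), φ.symm ↑h = ↑g →
      (ZAux.Cbar h).map φ.symm.toMonoidHom = ZAux.Cbar g := by
    intro h g hsym
    have hg : φ ↑g = ↑h := by rw [← hsym, MulEquiv.apply_symm_apply]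
    rw [← hφ g h hg, Subgroup.map_map]
    have hid : (φ.symm.toMonoidHom.comp φ.toMonoidHom) = MonoidHom.id _ := by
      ext x; simp
    rw [hid, Subgroup.map_id]
  set f : G → H := fun g => (φ ↑g).out with hfdef
  set f' : H → G := fun h => (φ.symm ↑h).out with hf'def
  have hf : ∀ g : G, φ ↑g = ↑(f g) := fun g => (QuotientGroup.out_eq' _).symm
  have hf' : ∀ h : H, φ.symm ↑h = ↑(f' h) := fun h => (QuotientGroup.out_eq' _).symm
  apply ZAux.card_zClasses_congr f f'
  · exact fun a b hab => ZAux.zEquiv_transfer φ hφ (hf a) (hf b) hab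
  · exact fun a b hab => ZAux.zEquiv_transfer φ.symm hφ' (hf' a) (hf' b) hab
  · intro g
    apply ZAux.zEquiv_of_mk_eq
    rw [← hf' (f g), ← hf g, MulEquiv.symm_apply_apply]
  · intro h
    apply ZAux.zEquiv_of_mk_eq
    rw [← hf (f' h), ← hf' h, MulEquiv.apply_symm_apply]
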